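/- Let G be a loopless multigraph on a finite vertex set V, let t ≥ 0 be an integer, and let H be the t-core of G. If μ_H(u,v) ≤ t+1 for all u,v ∈ V, and the simple graph B on V in which u and v are adjacent exactly when μ_H(u,v) = t+1 admits a full B-queue, then corefan(H) ≤ t. -/

import Mathlib

structure Multigraph (V : Type*) where
  mu : V → V → ℕ
  symm : ∀ u v, mu u v = mu v u
  loopless : ∀ v, mu v v = 0

namespace Multigraph

variable {V : Type*} [Fintype V]

/-- The degree of a vertex: number of incident edges. -/
def deg (G : Multigraph V) (v : V) : ℕ := ∑ u, G.mu v u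

/-- The maximum degree Δ(G). -/
def maxDeg (G : Multigraph V) : ℕ := Finset.univ.sup (deg G)

/-- The local multiplicity μ_G(v). -/
def locMult (G : Multigraph V) (v : V) : ℕ := Finset.univ.sup (G.mu v)

end Multigraph

namespace Multigraph

variable {V : Type*} [Fintype V]

/-- The t-core of G : induced submultigraph on the vertices v with
d_G(v) + μ_G(v) > Δ(G) + t. -/
def tCore (G : Multigraph V) (t : ℕ) : Multigraph V where
  mu u v := if (maxDeg G + t < deg G u + locMult G u) ∧
               (maxDeg G + t < deg G v + locMult G v) then G.mu u v else 0
  symm u v := by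
    try dsimp only
    by_cases h : (maxDeg G + t < deg G u + locMult G u) ∧
        (maxDeg G + t < deg G v + locMult G v)
    · rw [if_pos h, if_pos ⟨h.2, h.1⟩, G.symm]
    · rw [if_neg h, if_neg fun h' => h ⟨h'.2, h'.1⟩]
  loopless v := by
    try dsimp only
    split <;> simp [G.loopless]

end Multigraph

namespace Multigraph

variable {V : Type*} [Fintype V]

/-- K is a subgraph of H (same vertex set, smaller multiplicities). -/
def IsSubgraph (K H : Multigraph V) : Prop := ∀ u v, K.mu u v ≤ H.mu u v

/-- K has at least one edge. -/
def HasEdge (K : Multigraph V) : Prop := ∃ u v, 1 ≤ K.mu u v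

/-- The cfan degree cdeg_{H,K}(x,y): least l such that
∑_{z∈Z}(d_K(z) − d_H(z) + μ_K(x,z) − l) ≤ 1 for every Z ⊆ N_K(x) with y ∈ Z. -/
noncomputable def cdeg (H K : Multigraph V) (x y : V) : ℕ :=
  sInf { l : ℕ | ∀ Z : Finset V, (∀ z ∈ Z, 1 ≤ K.mu x z) → y ∈ Z →
    ∑ z ∈ Z, ((K.deg z : ℤ) - (H.deg z : ℤ) + (K.mu x z : ℤ) - (l : ℤ)) ≤ 1 }

/-- The cfan number corefan(H): max over nonempty subgraphs K of H of the min of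
cdeg_{H,K}(x,y) over edges xy of K (0 if H is edgeless). -/
noncomputable def corefan (H : Multigraph V) : ℕ :=
  sSup { n | ∃ K : Multigraph V, IsSubgraph K H ∧ HasEdge K ∧
    n = sInf { m | ∃ x y, 1 ≤ K.mu x y ∧ m = cdeg H K x y } }

end Multigraph

/-- A full B-queue for a finite simple graph B: distinct vertices u_1, …, u_q and
sets S_0 = ∅, S_1, …, S_q = V(B) with S_i = N(u_i) ∪ {u_i} ∪ S_{i−1},
1 ≤ |S_i \ S_{i−1}| ≤ 2 and |S_i \ (S_{i−1} ∪ {u_i})| ≤ 1 for each i. -/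
def HasFullBQueue {V : Type*} [Fintype V] (B : SimpleGraph V) : Prop :=
  ∃ (q : ℕ) (u : ℕ → V) (S : ℕ → Set V),
    (∀ i j, i < q → j < q → u i = u j → i = j) ∧
    S 0 = ∅ ∧
    (∀ i < q, S (i + 1) = B.neighborSet (u i) ∪ {u i} ∪ S i) ∧
    (∀ i < q, 1 ≤ (S (i + 1) \ S i).ncard ∧ (S (i + 1) \ S i).ncard ≤ 2) ∧
    (∀ i < q, (S (i + 1) \ (S i ∪ {u i})).ncard ≤ 1) ∧
    S q = Set.univ

section Aux

open Multigraph

variable {V : Type*} [Fintype V]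

lemma deg_mono {K H : Multigraph V} (h : Multigraph.IsSubgraph K H) (z : V) :
    K.deg z ≤ H.deg z :=
  Finset.sum_le_sum fun u _ => h z u

lemma full_mu {K H : Multigraph V} (h : Multigraph.IsSubgraph K H) {z : V}
    (hz : K.deg z = H.deg z) (u : V) : K.mu z u = H.mu z u :=
  (Finset.sum_eq_sum_iff_of_le (fun i _ => h z i)).1 hz u (Finset.mem_univ u)

/-- If there is a unique candidate `y` (full vertex joined to `x` with multiplicity `t+1`),
then the cfan degree of the edge `(x,y)` is at most `t`. -/
lemma cdeg_le_t {K H : Multigraph V} (hK : Multigraph.IsSubgraph K H) (t : ℕ)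
    (hmul : ∀ u v, H.mu u v ≤ t + 1) {x y : V} (hxy : 1 ≤ K.mu x y)
    (huq : ∀ z, K.deg z = H.deg z → K.mu x z = t + 1 → z = y) :
    Multigraph.cdeg H K x y ≤ t := by
  classical
  apply Nat.sInf_le
  intro Z hZ hyZ
  set g : V → ℤ := fun z => (K.deg z : ℤ) - (H.deg z : ℤ) + (K.mu x z : ℤ) - (t : ℤ) with hg
  have hsplit := Finset.add_sum_erase Z g hyZ
  have hy1 : g y ≤ 1 := by
    have h1 : (K.deg y : ℤ) ≤ (H.deg y : ℤ) := by exact_mod_cast deg_mono hK y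
    have h2 : (K.mu x y : ℤ) ≤ (t : ℤ) + 1 := by
      exact_mod_cast le_trans (hK x y) (hmul x y)
    simp only [hg]; linarith
  have hrest : ∑ z ∈ Z.erase y, g z ≤ 0 := by
    apply Finset.sum_nonpos
    intro z hz
    have hzy : z ≠ y := (Finset.mem_erase.1 hz).1
    have hdle : K.deg z ≤ H.deg z := deg_mono hK z
    by_cases hdeq : K.deg z = H.deg z
    · have hne : K.mu x z ≠ t + 1 := fun h => hzy (huq z hdeq h)
      have hle : K.mu x z ≤ t := by
        have := le_trans (hK x z) (hmul x z); omega
      have : (K.mu x z : ℤ) ≤ (t : ℤ) := by exact_mod_cast hle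
      simp only [hg, hdeq]; linarith
    · have hlt : K.deg z < H.deg z := lt_of_le_of_ne hdle hdeq
      have h1 : (K.deg z : ℤ) + 1 ≤ (H.deg z : ℤ) := by exact_mod_cast hlt
      have h2 : (K.mu x z : ℤ) ≤ (t : ℤ) + 1 := by
        exact_mod_cast le_trans (hK x z) (hmul x z)
      simp only [hg]; linarith
  calc ∑ z ∈ Z, g z = g y + ∑ z ∈ Z.erase y, g z := hsplit.symm
    _ ≤ 1 + 0 := add_le_add hy1 hrest
    _ = 1 := by ring

/-- The key B-queue lemma: no nonempty set `F` such that every vertex of `F` or adjacent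
to `F` has two distinct neighbours in `F`. -/
lemma queue_lemma {V : Type*} [Fintype V] {B : SimpleGraph V} (hq : HasFullBQueue B)
    (F : Set V)
    (hF : ∀ v, (v ∈ F ∨ ∃ f ∈ F, B.Adj v f) →
      ∃ z₁ z₂, z₁ ≠ z₂ ∧ z₁ ∈ F ∧ z₂ ∈ F ∧ B.Adj v z₁ ∧ B.Adj v z₂) :
    F = ∅ := by
  classical
  by_contra hne
  obtain ⟨f₀, hf₀⟩ := Set.nonempty_iff_ne_empty.2 hne
  obtain ⟨q, u, S, -, hS0, hstep, -, hcard1, hSq⟩ := hq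
  set P : ℕ → Prop := fun i => i ≤ q ∧ (S i ∩ F).Nonempty with hP
  have hqP : P q := ⟨le_refl q, ⟨f₀, by rw [hSq]; exact ⟨trivial, hf₀⟩⟩⟩
  have hPne : {i | P i}.Nonempty := ⟨q, hqP⟩
  set i₀ := sInf {i | P i} with hi₀def
  have hi₀ : P i₀ := Nat.sInf_mem hPne
  have hi₀pos : 0 < i₀ := by
    rcases Nat.eq_zero_or_pos i₀ with h | h
    · exfalso
      have := hi₀.2
      rw [h, hS0] at this
      simp at this
    · exact h
  set j := i₀ - 1 with hjdef
  have hji : j + 1 = i₀ := Nat.succ_pred_eq_of_pos hi₀pos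
  have hjq : j < q := by
    have := hi₀.1; omega
  have hSjF : S j ∩ F = ∅ := by
    by_contra h
    have hj : P j := ⟨le_of_lt hjq, Set.nonempty_iff_ne_empty.2 h⟩
    have : i₀ ≤ j := Nat.sInf_le hj
    omega
  obtain ⟨f, hfS, hfF⟩ : (S (j + 1) ∩ F).Nonempty := by rw [hji]; exact hi₀.2
  have hstepj := hstep j hjq
  have hnotinSj : ∀ z ∈ F, z ∉ S j := by
    intro z hz hcontra
    have : z ∈ S j ∩ F := ⟨hcontra, hz⟩
    rw [hSjF] at this; exact this
  by_cases hc : u j ∈ F ∨ ∃ f' ∈ F, B.Adj (u j) f'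
  · obtain ⟨z₁, z₂, hz12, hz₁F, hz₂F, ha₁, ha₂⟩ := hF (u j) hc
    have hmem : ∀ z, z ∈ F → B.Adj (u j) z → z ∈ S (j + 1) \ (S j ∪ {u j}) := by
      intro z hzF hadj
      refine ⟨?_, ?_⟩
      · rw [hstepj]; exact Or.inl (Or.inl hadj)
      · rintro (h | h)
        · exact hnotinSj z hzF h
        · exact hadj.ne' h
    have h2 : 1 < (S (j + 1) \ (S j ∪ {u j})).ncard := by
      rw [Set.one_lt_ncard (Set.toFinite _)]
      exact ⟨z₁, hmem z₁ hz₁F ha₁, z₂, hmem z₂ hz₂F ha₂, hz12⟩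
    have := hcard1 j hjq
    omega
  · push_neg at hc
    obtain ⟨hc1, hc2⟩ := hc
    rw [hstepj] at hfS
    rcases hfS with (hfS | hfS) | hfS
    · exact hc2 f hfF (SimpleGraph.mem_neighborSet B (u j) f |>.1 hfS)
    · rw [Set.mem_singleton_iff] at hfS
      exact hc1 (hfS ▸ hfF)
    · exact hnotinSj f hfF hfS

/-- The key combinatorial lemma: there exists a "good" edge. -/
lemma exists_good_edge {K H : Multigraph V} (hK : Multigraph.IsSubgraph K H)
    (hE : Multigraph.HasEdge K) (t : ℕ) (hmul : ∀ u v, H.mu u v ≤ t + 1)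
    {B : SimpleGraph V} (hB : ∀ u v, B.Adj u v ↔ H.mu u v = t + 1)
    (hq : HasFullBQueue B) :
    ∃ x y, 1 ≤ K.mu x y ∧ ∀ z, K.deg z = H.deg z → K.mu x z = t + 1 → z = y := by
  classical
  by_contra hcon
  push_neg at hcon
  -- hcon : ∀ x y, 1 ≤ K.mu x y → ∃ z, K.deg z = H.deg z ∧ K.mu x z = t+1 ∧ z ≠ y
  set F : Set V := {z | K.deg z = H.deg z ∧ ∃ w, 1 ≤ K.mu z w} with hFdef
  -- any vertex with a K-edge has two distinct F-neighbours in B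
  have hkey : ∀ v w, 1 ≤ K.mu v w →
      ∃ z₁ z₂, z₁ ≠ z₂ ∧ z₁ ∈ F ∧ z₂ ∈ F ∧ B.Adj v z₁ ∧ B.Adj v z₂ := by
    intro v w hvw
    obtain ⟨z₁, hz₁d, hz₁m, -⟩ := hcon v w hvw
    obtain ⟨z₂, hz₂d, hz₂m, hz₂ne⟩ := hcon v z₁ (by omega)
    have hmemF : ∀ z, K.deg z = H.deg z → K.mu v z = t + 1 → z ∈ F := by
      intro z h1 h2
      exact ⟨h1, ⟨v, by rw [K.symm]; omega⟩⟩
    have hadj : ∀ z, K.mu v z = t + 1 → B.Adj v z := by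
      intro z h2
      rw [hB]
      have h3 := hK v z
      have h4 := hmul v z
      omega
    exact ⟨z₂, z₁, hz₂ne, hmemF z₂ hz₂d hz₂m, hmemF z₁ hz₁d hz₁m,
      hadj z₂ hz₂m, hadj z₁ hz₁m⟩
  have hFhyp : ∀ v, (v ∈ F ∨ ∃ f ∈ F, B.Adj v f) →
      ∃ z₁ z₂, z₁ ≠ z₂ ∧ z₁ ∈ F ∧ z₂ ∈ F ∧ B.Adj v z₁ ∧ B.Adj v z₂ := by
    intro v hv
    rcases hv with hv | ⟨f, hfF, hadj⟩
    · obtain ⟨-, w, hw⟩ := hv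
      exact hkey v w hw
    · -- v is B-adjacent to the full vertex f, so the edge vf lies fully in K
      have hmu : H.mu v f = t + 1 := (hB v f).1 hadj
      have hKf : K.mu f v = H.mu f v := full_mu hK hfF.1 v
      have : 1 ≤ K.mu v f := by
        rw [K.symm, hKf, H.symm, hmu]; omega
      exact hkey v f this
  have hFempty : F = ∅ := queue_lemma hq F hFhyp
  -- but F is nonempty
  obtain ⟨x₀, y₀, hx₀⟩ := hE
  obtain ⟨z₁, hz₁d, hz₁m, -⟩ := hcon x₀ y₀ hx₀
  have : z₁ ∈ F := ⟨hz₁d, ⟨x₀, by rw [K.symm]; omega⟩⟩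
  rw [hFempty] at this
  exact this

end Aux

/-- Theorem: if the t-core H of G has multiplicity at most t+1 and the simple graph B of
its multiplicity-(t+1) edges has a full B-queue, then corefan(H) ≤ t. -/
theorem stmt4 {V : Type*} [Fintype V] (G : Multigraph V) (t : ℕ)
    (H : Multigraph V) (hH : H = G.tCore t)
    (hmul : ∀ u v, H.mu u v ≤ t + 1)
    (B : SimpleGraph V) (hB : ∀ u v, B.Adj u v ↔ H.mu u v = t + 1)
    (hq : HasFullBQueue B) :
    H.corefan ≤ t := by
  apply csSup_le'
  rintro n ⟨K, hKsub, hKedge, rfl⟩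
  obtain ⟨x, y, hxy, huq⟩ := exists_good_edge hKsub hKedge t hmul hB hq
  calc sInf {m | ∃ x y, 1 ≤ K.mu x y ∧ m = Multigraph.cdeg H K x y}
      ≤ Multigraph.cdeg H K x y := Nat.sInf_le ⟨x, y, hxy, rfl⟩
    _ ≤ t := cdeg_le_t hKsub t hmul hxy huq
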